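/- Let D be an integral domain in which the intersection of every infinite family of pairwise incomparable principal ideals is the zero ideal (property (*)). Then D is both an IDF domain and MCD-finite. -/
import Mathlib


/-- An integral domain is an *IDF domain* if every nonzero element has only finitely
many irreducible divisors up to associates. -/
def IsIDFDomain (D : Type*) [CommMonoidWithZero D] : Prop :=
  ∀ a : D, a ≠ 0 → (Associates.mk '' {p : D | Irreducible p ∧ p ∣ a}).Finite

/-- `c` is a *maximal common divisor* (MCD) of the set `T`: it is a common divisor of
`T` and every common divisor of `T` divisible by `c` is an associate of `c`. -/
def IsMCD {D : Type*} [CommMonoidWithZero D] (T : Set D) (c : D) : Prop :=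
  (∀ t ∈ T, c ∣ t) ∧ ∀ d : D, (∀ t ∈ T, d ∣ t) → c ∣ d → Associated c d

/-- A domain is *MCD-finite* if every finite subset of its nonzero elements has only
finitely many maximal common divisors up to associates. -/
def MCDFinite (D : Type*) [CommMonoidWithZero D] : Prop :=
  ∀ T : Set D, T.Finite → (∀ t ∈ T, t ≠ 0) →
    (Associates.mk '' {c : D | IsMCD T c}).Finite

open Classical in
lemma key_star {D : Type*} [CommRing D] [IsDomain D]
    (hstar : ∀ S : Set (Ideal D), (∀ I ∈ S, ∃ x : D, I = Ideal.span {x}) →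
      (∀ I ∈ S, ∀ J ∈ S, I ≠ J → ¬ I ≤ J ∧ ¬ J ≤ I) → S.Infinite → sInf S = ⊥)
    {a : D} (ha : a ≠ 0) {P : Set D}
    (hPd : ∀ p ∈ P, p ∣ a)
    (hinc : ∀ p ∈ P, ∀ q ∈ P, ¬ Associated p q → ¬ p ∣ q) :
    (Associates.mk '' P).Finite := by
  by_contra hinf
  replace hinf : (Associates.mk '' P).Infinite := hinf
  set f : D → Ideal D := fun p => Ideal.span {p} with hf
  have hS : (f '' P).Infinite := by
    intro hfin
    apply hinf
    set g : Ideal D → Associates D := fun I =>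
      if h : ∃ p ∈ P, I = Ideal.span {p} then Associates.mk h.choose else 0 with hg
    have hsurj : Set.SurjOn g (f '' P) (Associates.mk '' P) := by
      rintro x ⟨p, hp, rfl⟩
      refine ⟨Ideal.span {p}, ⟨p, hp, rfl⟩, ?_⟩
      have hex : ∃ q ∈ P, Ideal.span ({p} : Set D) = Ideal.span {q} := ⟨p, hp, rfl⟩
      simp only [hg, dif_pos hex]
      have := hex.choose_spec.2
      rw [Ideal.span_singleton_eq_span_singleton] at this
      exact Associates.mk_eq_mk_iff_associated.mpr this.symm
    exact hfin.of_surjOn g hsurj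
  have hprin : ∀ I ∈ f '' P, ∃ x : D, I = Ideal.span {x} := by
    rintro I ⟨p, hp, rfl⟩; exact ⟨p, rfl⟩
  have hincomp : ∀ I ∈ f '' P, ∀ J ∈ f '' P, I ≠ J → ¬ I ≤ J ∧ ¬ J ≤ I := by
    rintro I ⟨p, hp, rfl⟩ J ⟨q, hq, rfl⟩ hne
    have hna : ¬ Associated p q := fun h => hne (Ideal.span_singleton_eq_span_singleton.mpr h)
    constructor
    · rw [hf]; simp only [Ideal.span_singleton_le_span_singleton]
      exact hinc q hq p hp (fun h => hna h.symm.symm.symm)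
    · rw [hf]; simp only [Ideal.span_singleton_le_span_singleton]
      exact hinc p hp q hq hna
  have hbot := hstar (f '' P) hprin hincomp hS
  have haI : a ∈ sInf (f '' P) := by
    rw [Ideal.mem_sInf]
    rintro I ⟨p, hp, rfl⟩
    exact Ideal.mem_span_singleton.mpr (hPd p hp)
  rw [hbot, Ideal.mem_bot] at haI
  exact ha haI

/-- If in an integral domain `D` the intersection of every infinite family of pairwise
incomparable principal ideals is the zero ideal (property `(*)`), then `D` is both an
IDF domain and MCD-finite. -/
theorem isIDF_and_mcdFinite_of_star_property (D : Type*) [CommRing D] [IsDomain D]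
    (hstar : ∀ S : Set (Ideal D), (∀ I ∈ S, ∃ x : D, I = Ideal.span {x}) →
      (∀ I ∈ S, ∀ J ∈ S, I ≠ J → ¬ I ≤ J ∧ ¬ J ≤ I) → S.Infinite → sInf S = ⊥) :
    IsIDFDomain D ∧ MCDFinite D := by
  constructor
  · intro a ha
    refine key_star hstar ha (fun p hp => hp.2) ?_
    rintro p ⟨hpirr, -⟩ q ⟨hqirr, -⟩ hna hdvd
    exact hna (hpirr.associated_of_dvd hqirr hdvd)
  · intro T hTfin hT0
    rcases T.eq_empty_or_nonempty with rfl | ⟨t₀, ht₀⟩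
    · refine Set.Finite.subset (Set.finite_singleton (Associates.mk (0 : D))) ?_
      rintro x ⟨c, hc, rfl⟩
      have : c = 0 := by
        have := hc.2 0 (by simp) (dvd_zero c)
        exact (associated_zero_iff_eq_zero c).mp this
      simp [this]
    · refine key_star hstar (hT0 t₀ ht₀) (fun c hc => hc.1 t₀ ht₀) ?_
      rintro c hc d hd hna hdvd
      exact hna (hc.2 d hd.1 hdvd)
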